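/- arXiv:2509.14588 — 2 statements merged into one kernel-verified Lean document; each statement's English description precedes it below -/
import Mathlib

section
/- Let (x1, y1) and (x2, y2) be pairs of vertices of G with (x1, y1) ≠ (x2, y2) as ordered pairs. Then the polynomial F_disj(x1, y1, x2, y2) is nonzero if and only if there exists a pair (P1, P2) ∈ Π(x1, y1) × Π(x2, y2) of internally vertex-disjoint shortest paths; in particular, distinct internally vertex-disjoint pairs (P1, P2) contribute distinct monomials f(P1)f(P2). -/
open scoped BigOperators

namespace DSP

variable {V : Type*} [Fintype V] [DecidableEq V]

/-- A path: a nonempty list of distinct vertices in which each consecutive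
pair is joined by a directed edge. -/
def IsPath (E : V → V → Prop) (p : List V) : Prop :=
  p ≠ [] ∧ p.Nodup ∧ p.Chain' E

/-- A path from `x` to `y`. -/
def IsPathFrom (E : V → V → Prop) (p : List V) (x y : V) : Prop :=
  IsPath E p ∧ p.head? = some x ∧ p.getLast? = some y

/-- The (ordered) list of edges of a path. -/
def pathEdges (p : List V) : List (V × V) := p.zip p.tail

/-- The weight of a path: the sum of its edge weights. -/
def pathWeight (ℓ : V → V → ℝ) (p : List V) : ℝ :=
  ((pathEdges p).map fun e => ℓ e.1 e.2).sum

/-- `dist x y` : the minimum weight of a path from `x` to `y`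
(`⊤` if there is no such path). -/
noncomputable def dist (E : V → V → Prop) (ℓ : V → V → ℝ) (x y : V) : EReal :=
  sInf {w : EReal | ∃ p : List V, IsPathFrom E p x y ∧ (pathWeight ℓ p : EReal) = w}

/-- A shortest path from `x` to `y` : a path from `x` to `y` whose weight
equals `dist x y`.  `Π(x, y)` is the set of all such paths. -/
def IsShortestPath (E : V → V → Prop) (ℓ : V → V → ℝ) (p : List V) (x y : V) : Prop :=
  IsPathFrom E p x y ∧ (pathWeight ℓ p : EReal) = dist E ℓ x y

/-- A directed cycle: a closed walk with at least one edge whose internal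
vertices are pairwise distinct. -/
def IsCycle (E : V → V → Prop) (p : List V) : Prop :=
  2 ≤ p.length ∧ p.Chain' E ∧ p.head? = p.getLast? ∧ p.tail.Nodup

/-- `G` contains no directed cycle of negative or zero total weight. -/
def NoNonposCycle (E : V → V → Prop) (ℓ : V → V → ℝ) : Prop :=
  ∀ p : List V, IsCycle E p → 0 < pathWeight ℓ p

/-- `G` is a DAG: it contains no directed cycle. -/
def Acyclic (E : V → V → Prop) : Prop :=
  ∀ p : List V, ¬ IsCycle E p

/-- `x` precedes `y` on the path `p` (`x = y` allowed). -/
def Precedes (p : List V) (x y : V) : Prop :=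
  x ∈ p ∧ y ∈ p ∧ p.idxOf x ≤ p.idxOf y

/-- `subpath p x y` : the subpath `p[x, y]` of `p` from `x` to `y`
(for `x` preceding `y` on `p`). -/
def subpath (p : List V) (x y : V) : List V :=
  (p.take (p.idxOf y + 1)).drop (p.idxOf x)

/-- Concatenation `p · q` of two paths (the last vertex of `p` coinciding
with the first vertex of `q`). -/
def pathConcat (p q : List V) : List V := p ++ q.tail

/-- A vertex is internal to a path if it lies on it and is not an endpoint. -/
def Internal (p : List V) (v : V) : Prop :=
  v ∈ p ∧ p.head? ≠ some v ∧ p.getLast? ≠ some v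

/-- Paths `p1` from `x1` to `y1` and `p2` from `x2` to `y2` are internally
vertex-disjoint: they share no vertices except possibly those in
`{x1, y1} ∩ {x2, y2}`. -/
def InternallyDisjoint (p1 : List V) (x1 y1 : V) (p2 : List V) (x2 y2 : V) : Prop :=
  ∀ u, u ∈ p1 → u ∈ p2 → u ∈ ({x1, y1} ∩ {x2, y2} : Set V)

/-- `(a, b)` is a twin-crossing pair for paths `p1`, `p2`. -/
def TwinCrossingPair (p1 p2 : List V) (a b : V) : Prop :=
  a ≠ b ∧ Precedes p1 a b ∧ Precedes p2 a b ∧ subpath p1 a b ≠ subpath p2 a b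

/-- The swap operation `φ_{a,b}(P1, P2)`. -/
def swap (p1 : List V) (x1 y1 : V) (p2 : List V) (x2 y2 : V) (a b : V) :
    List V × List V :=
  (pathConcat (pathConcat (subpath p1 x1 a) (subpath p2 a b)) (subpath p1 b y1),
   pathConcat (pathConcat (subpath p2 x2 a) (subpath p1 a b)) (subpath p2 b y2))

/-- The graph with vertex `u` deleted. -/
def deleteVertex (E : V → V → Prop) (u : V) : V → V → Prop :=
  fun a b => E a b ∧ a ≠ u ∧ b ≠ u

/-- `u` is distance-critical for `(x, y)` : deleting `u` strictly increases
the distance from `x` to `y`. -/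
def DistCritical (E : V → V → Prop) (ℓ : V → V → ℝ) (x y u : V) : Prop :=
  dist E ℓ x y < dist (deleteVertex E u) ℓ x y

/-- `Δ(x, y)` : the distance-critical vertices for `(x, y)` together with the
endpoints `x`, `y`. -/
def Delta (E : V → V → Prop) (ℓ : V → V → ℝ) (x y : V) : Set V :=
  {u | DistCritical E ℓ x y u} ∪ {x, y}

/-- `δ(x, y) = |Δ(x, y)|`. -/
noncomputable def deltaCard (E : V → V → Prop) (ℓ : V → V → ℝ) (x y : V) : ℕ :=
  (Delta E ℓ x y).ncard

/-- `(a, b)` is a concordant pair for paths `p1` (from `x1` to `y1`) and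
`p2` (from `x2` to `y2`). -/
def ConcordantPair (p1 : List V) (x1 y1 : V) (p2 : List V) (x2 y2 : V) (a b : V) : Prop :=
  a ∉ ({x1, y1} ∩ {x2, y2} : Set V) ∧ b ∉ ({x1, y1} ∩ {x2, y2} : Set V) ∧
  Precedes p1 a b ∧ Precedes p2 a b ∧
  InternallyDisjoint (subpath p1 x1 a) x1 a (subpath p2 x2 a) x2 a ∧
  InternallyDisjoint (subpath p1 b y1) b y1 (subpath p2 b y2) b y2

/-- `𝒞(P1, P2)` : the set of concordant pairs for `(P1, P2)`. -/
def concordantSet (p1 : List V) (x1 y1 : V) (p2 : List V) (x2 y2 : V) : Set (V × V) :=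
  {c | ConcordantPair p1 x1 y1 p2 x2 y2 c.1 c.2}

/-- The interaction complexity `γ(P1, P2) = Σ_{(v,w) ∈ 𝒞(P1,P2)} δ(v, w)`. -/
noncomputable def gamma (E : V → V → Prop) (ℓ : V → V → ℝ)
    (p1 : List V) (x1 y1 : V) (p2 : List V) (x2 y2 : V) : ℕ :=
  ∑ᶠ c ∈ concordantSet p1 x1 y1 p2 x2 y2, deltaCard E ℓ c.1 c.2

/-- `E(x, y)` : the set of edges lying on at least one shortest path
from `x` to `y`. -/
def shortestEdges (E : V → V → Prop) (ℓ : V → V → ℝ) (x y : V) : Set (V × V) :=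
  {e | ∃ p : List V, IsShortestPath E ℓ p x y ∧ e ∈ pathEdges p}

section Poly

variable (F : Type*) [Field F] [CharP F 2]

/-- The monomial `f(P) = ∏_{e ∈ E(P)} z_e` of a path. -/
noncomputable def pathMon (p : List V) : MvPolynomial (V × V) F :=
  ((pathEdges p).map fun e => MvPolynomial.X e).prod

/-- The enumerating polynomial of a collection of paths. -/
noncomputable def enumPoly (S : Set (List V)) : MvPolynomial (V × V) F :=
  ∑ᶠ p ∈ S, pathMon F p

/-- The enumerating polynomial of a collection of pairs of paths. -/
noncomputable def enumPoly2 (S : Set (List V × List V)) : MvPolynomial (V × V) F :=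
  ∑ᶠ q ∈ S, pathMon F q.1 * pathMon F q.2

variable (E : V → V → Prop) (ℓ : V → V → ℝ)

/-- `F(x, y)` : the enumerating polynomial of `Π(x, y)`. -/
noncomputable def Fpoly (x y : V) : MvPolynomial (V × V) F :=
  enumPoly F {p : List V | IsShortestPath E ℓ p x y}

end Poly

variable (E : V → V → Prop) (ℓ : V → V → ℝ)

/-- The collection of internally vertex-disjoint pairs
`(P1, P2) ∈ Π(x1, y1) × Π(x2, y2)`. -/
def disjPairs (x1 y1 x2 y2 : V) : Set (List V × List V) :=
  {q | IsShortestPath E ℓ q.1 x1 y1 ∧ IsShortestPath E ℓ q.2 x2 y2 ∧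
       InternallyDisjoint q.1 x1 y1 q.2 x2 y2}

/-- Pairs `(P1, P2) ∈ Π(x1, y1) × Π(x2, y2)` such that `v ∈ V(P1) ∩ V(P2)`
and the prefix `P1[x1, v]` and the suffix `P2[v, y2]` are internally
vertex-disjoint (defining `H_v`). -/
def HvPairs (v x1 y1 x2 y2 : V) : Set (List V × List V) :=
  {q | IsShortestPath E ℓ q.1 x1 y1 ∧ IsShortestPath E ℓ q.2 x2 y2 ∧
       v ∈ q.1 ∧ v ∈ q.2 ∧
       InternallyDisjoint (subpath q.1 x1 v) x1 v (subpath q.2 v y2) v y2}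

/-- Pairs `(P1, P2) ∈ Π(x1, y1) × Π(x2, y2)` such that
`(a, v) ∈ E(P1) ∩ E(P2)` and the prefix `P1[x1, a]` and the suffix
`P2[v, y2]` are internally vertex-disjoint (defining `H_{av}`). -/
def HavPairs (a v x1 y1 x2 y2 : V) : Set (List V × List V) :=
  {q | IsShortestPath E ℓ q.1 x1 y1 ∧ IsShortestPath E ℓ q.2 x2 y2 ∧
       (a, v) ∈ pathEdges q.1 ∧ (a, v) ∈ pathEdges q.2 ∧
       InternallyDisjoint (subpath q.1 x1 a) x1 a (subpath q.2 v y2) v y2}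

/-- Pairs `(P1, P2) ∈ Π(x1, y1) × Π(x2, y2)` such that `v ∈ V(P1) ∩ V(P2)`
and the prefix `P1[x1, v]` is internally vertex-disjoint from both
`P2[x2, v]` and `P2[v, y2]` (defining `D_v`). -/
def DvPairs (v x1 y1 x2 y2 : V) : Set (List V × List V) :=
  {q | IsShortestPath E ℓ q.1 x1 y1 ∧ IsShortestPath E ℓ q.2 x2 y2 ∧
       v ∈ q.1 ∧ v ∈ q.2 ∧
       InternallyDisjoint (subpath q.1 x1 v) x1 v (subpath q.2 x2 v) x2 v ∧
       InternallyDisjoint (subpath q.1 x1 v) x1 v (subpath q.2 v y2) v y2}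

/-- Pairs `(P1, P2) ∈ Π(x1, y1) × Π(x2, y2)` with interaction complexity
`γ(P1, P2) ≤ k` (defining `F_{disj,k}`). -/
def disjkPairs (k : ℤ) (x1 y1 x2 y2 : V) : Set (List V × List V) :=
  {q | IsShortestPath E ℓ q.1 x1 y1 ∧ IsShortestPath E ℓ q.2 x2 y2 ∧
       (gamma E ℓ q.1 x1 y1 q.2 x2 y2 : ℤ) ≤ k}

/-- Pairs `(P1, P2) ∈ Π(x1, y1) × Π(x2, y2)` with `γ(P1, P2) ≤ k` such that
`(v, w) ∈ 𝒞(P1, P2)` and `(v, w)` is the concordant pair appearing first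
along `P1` (defining `D_{v,w,k}`). -/
def DvwkPairs (k : ℤ) (v w x1 y1 x2 y2 : V) : Set (List V × List V) :=
  {q | IsShortestPath E ℓ q.1 x1 y1 ∧ IsShortestPath E ℓ q.2 x2 y2 ∧
       (gamma E ℓ q.1 x1 y1 q.2 x2 y2 : ℤ) ≤ k ∧
       (v, w) ∈ concordantSet q.1 x1 y1 q.2 x2 y2 ∧
       ∀ c ∈ concordantSet q.1 x1 y1 q.2 x2 y2, q.1.idxOf v ≤ q.1.idxOf c.1}

/-- Pairs `(P1, P2) ∈ Π(x1, y1) × Π(x2, y2)` such that `v` and `w` lie on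
both paths with `v` preceding `w` on both, the subpaths `P1[x1, v]` and
`P2[w, y2]` are internally vertex-disjoint, and
`γ(P1[v, y1], P2[x2, w]) ≤ k` (defining `H_{v,w,k}`). -/
def HvwkPairs (k : ℤ) (v w x1 y1 x2 y2 : V) : Set (List V × List V) :=
  {q | IsShortestPath E ℓ q.1 x1 y1 ∧ IsShortestPath E ℓ q.2 x2 y2 ∧
       Precedes q.1 v w ∧ Precedes q.2 v w ∧
       InternallyDisjoint (subpath q.1 x1 v) x1 v (subpath q.2 w y2) w y2 ∧
       (gamma E ℓ (subpath q.1 v y1) v y1 (subpath q.2 x2 w) x2 w : ℤ) ≤ k}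

/-- As `HvwkPairs`, additionally requiring the edge `(a, v)` on both paths
(disjointness imposed on `P1[x1, a]` and `P2[w, y2]`), defining `H_{av,w,k}`. -/
def HavwkPairs (k : ℤ) (a v w x1 y1 x2 y2 : V) : Set (List V × List V) :=
  {q | IsShortestPath E ℓ q.1 x1 y1 ∧ IsShortestPath E ℓ q.2 x2 y2 ∧
       Precedes q.1 v w ∧ Precedes q.2 v w ∧
       (a, v) ∈ pathEdges q.1 ∧ (a, v) ∈ pathEdges q.2 ∧
       InternallyDisjoint (subpath q.1 x1 a) x1 a (subpath q.2 w y2) w y2 ∧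
       (gamma E ℓ (subpath q.1 v y1) v y1 (subpath q.2 x2 w) x2 w : ℤ) ≤ k}

/-- As `HvwkPairs`, additionally requiring the edge `(w, b)` on both paths
(disjointness imposed on `P1[x1, v]` and `P2[b, y2]`), defining `H_{v,wb,k}`. -/
def HvwbkPairs (k : ℤ) (v w b x1 y1 x2 y2 : V) : Set (List V × List V) :=
  {q | IsShortestPath E ℓ q.1 x1 y1 ∧ IsShortestPath E ℓ q.2 x2 y2 ∧
       Precedes q.1 v w ∧ Precedes q.2 v w ∧
       (w, b) ∈ pathEdges q.1 ∧ (w, b) ∈ pathEdges q.2 ∧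
       InternallyDisjoint (subpath q.1 x1 v) x1 v (subpath q.2 b y2) b y2 ∧
       (gamma E ℓ (subpath q.1 v y1) v y1 (subpath q.2 x2 w) x2 w : ℤ) ≤ k}

/-- As `HvwkPairs`, additionally requiring both edges `(a, v)` and `(w, b)`
on both paths (disjointness imposed on `P1[x1, a]` and `P2[b, y2]`),
defining `H_{av,wb,k}`. -/
def HavwbkPairs (k : ℤ) (a v w b x1 y1 x2 y2 : V) : Set (List V × List V) :=
  {q | IsShortestPath E ℓ q.1 x1 y1 ∧ IsShortestPath E ℓ q.2 x2 y2 ∧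
       Precedes q.1 v w ∧ Precedes q.2 v w ∧
       (a, v) ∈ pathEdges q.1 ∧ (a, v) ∈ pathEdges q.2 ∧
       (w, b) ∈ pathEdges q.1 ∧ (w, b) ∈ pathEdges q.2 ∧
       InternallyDisjoint (subpath q.1 x1 a) x1 a (subpath q.2 b y2) b y2 ∧
       (gamma E ℓ (subpath q.1 v y1) v y1 (subpath q.2 x2 w) x2 w : ℤ) ≤ k}



set_option linter.unusedSectionVars false

lemma pathEdges_cons_cons (x y : V) (t : List V) :
    pathEdges (x :: y :: t) = (x, y) :: pathEdges (y :: t) := rfl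

lemma mem_left_of_pathEdges {p : List V} {u v : V} (h : (u, v) ∈ pathEdges p) : u ∈ p :=
  (List.of_mem_zip h).1

lemma mem_right_of_pathEdges {p : List V} {u v : V} (h : (u, v) ∈ pathEdges p) : v ∈ p :=
  List.mem_of_mem_tail (List.of_mem_zip h).2

lemma mem_pathEdges_cons {x : V} {t : List V} {e : V × V} (h : e ∈ pathEdges t) :
    e ∈ pathEdges (x :: t) := by
  cases t with
  | nil => simp [pathEdges] at h
  | cons y t' => rw [pathEdges_cons_cons]; exact List.mem_cons_of_mem _ h

lemma pathEdges_out_unique (p : List V) : ∀ {u v v' : V}, p.Nodup →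
    (u, v) ∈ pathEdges p → (u, v') ∈ pathEdges p → v = v' := by
  induction p with
  | nil => intro u v v' _ h; simp [pathEdges] at h
  | cons x t ih =>
    intro u v v' hnd h1 h2
    cases t with
    | nil => simp [pathEdges] at h1
    | cons y t' =>
      rw [pathEdges_cons_cons] at h1 h2
      rcases List.mem_cons.mp h1 with g1 | g1 <;> rcases List.mem_cons.mp h2 with g2 | g2
      · rw [Prod.mk.injEq] at g1 g2; rw [g1.2, g2.2]
      · exfalso; rw [Prod.mk.injEq] at g1; obtain ⟨rfl, rfl⟩ := g1
        exact (List.nodup_cons.mp hnd).1 (mem_left_of_pathEdges g2)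
      · exfalso; rw [Prod.mk.injEq] at g2; obtain ⟨rfl, rfl⟩ := g2
        exact (List.nodup_cons.mp hnd).1 (mem_left_of_pathEdges g1)
      · exact ih (List.nodup_cons.mp hnd).2 g1 g2

lemma pathEdges_last_not_source (p : List V) : ∀ {y v : V}, p.Nodup →
    p.getLast? = some y → (y, v) ∈ pathEdges p → False := by
  induction p with
  | nil => intro y v _ _ h; simp [pathEdges] at h
  | cons x t ih =>
    intro y v hnd hl h
    cases t with
    | nil => simp [pathEdges] at h
    | cons b t' =>
      rw [pathEdges_cons_cons] at h
      rw [List.getLast?_cons_cons] at hl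
      rcases List.mem_cons.mp h with g | g
      · rw [Prod.mk.injEq] at g
        exact (List.nodup_cons.mp hnd).1 (g.1 ▸ List.mem_of_mem_getLast? (hl ▸ rfl))
      · exact ih (List.nodup_cons.mp hnd).2 hl g

lemma pathEdges_head_not_target {p : List V} {x u : V} (hnd : p.Nodup)
    (hh : p.head? = some x) (h : (u, x) ∈ pathEdges p) : False := by
  have hx : x ∈ p.tail := (List.of_mem_zip h).2
  cases p with
  | nil => simp at hh
  | cons a t =>
    obtain rfl : a = x := by simpa using hh
    exact (List.nodup_cons.mp hnd).1 hx

lemma pathEdges_head_eq {p : List V} {x c : V} (hnd : p.Nodup)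
    (hh : p.head? = some x) (he : (x, c) ∈ pathEdges p) : ∃ t, p = x :: c :: t := by
  cases p with
  | nil => simp at hh
  | cons a t =>
    obtain rfl : a = x := by simpa using hh
    cases t with
    | nil => simp [pathEdges] at he
    | cons d t' =>
      rw [pathEdges_cons_cons] at he
      rcases List.mem_cons.mp he with g | g
      · rw [Prod.mk.injEq] at g; exact ⟨t', by rw [g.2]⟩
      · exact absurd (mem_left_of_pathEdges g) (List.nodup_cons.mp hnd).1

lemma eq_of_pathEdges (p : List V) : ∀ (q : List V), p.Nodup → q.Nodup →
    p.head? = q.head? → (∀ e, e ∈ pathEdges p ↔ e ∈ pathEdges q) → p = q := by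
  induction p with
  | nil =>
    intro q _ _ hh _
    cases q with
    | nil => rfl
    | cons b t => simp at hh
  | cons x t ih =>
    intro q hp hq hh he
    cases q with
    | nil => simp at hh
    | cons x' tq =>
      obtain rfl : x = x' := by simpa using hh
      cases t with
      | nil =>
        cases tq with
        | nil => rfl
        | cons c tq' =>
          exfalso
          have hm : (x, c) ∈ pathEdges [x] := (he _).mpr
            (by rw [pathEdges_cons_cons]; exact List.mem_cons_self)
          simp [pathEdges] at hm
      | cons b t' =>
        have hxb : (x, b) ∈ pathEdges (x :: tq) := (he _).mp
          (by rw [pathEdges_cons_cons]; exact List.mem_cons_self)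
        obtain ⟨t'', ht⟩ := pathEdges_head_eq hq (by simp) hxb
        have htq : tq = b :: t'' := by injection ht
        subst htq
        have heq : (b :: t') = (b :: t'') := by
          apply ih (b :: t'') (List.nodup_cons.mp hp).2 (List.nodup_cons.mp hq).2 rfl
          intro e
          constructor
          · intro h
            have h2 := (he e).mp (mem_pathEdges_cons h)
            rw [pathEdges_cons_cons] at h2
            rcases List.mem_cons.mp h2 with g | g
            · exfalso; subst g
              exact (List.nodup_cons.mp hp).1 (mem_left_of_pathEdges h)
            · exact g
          · intro h
            have h2 := (he e).mpr (mem_pathEdges_cons h)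
            rw [pathEdges_cons_cons] at h2
            rcases List.mem_cons.mp h2 with g | g
            · exfalso; subst g
              exact (List.nodup_cons.mp hq).1 (mem_left_of_pathEdges h)
            · exact g
        rw [heq]

lemma follow (p : List V) : ∀ (q : List V), p.Nodup → q.Nodup → p.head? = q.head? →
    (∀ w c, (w, c) ∈ pathEdges p → w ∈ q → q.getLast? ≠ some w → (w, c) ∈ pathEdges q) →
    (∀ w c, (w, c) ∈ pathEdges q → w ∈ p → p.getLast? ≠ some w → (w, c) ∈ pathEdges p) →
    p <+: q ∨ q <+: p := by
  induction p with
  | nil => intro q _ _ _ _ _; exact Or.inl List.nil_prefix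
  | cons x t ih =>
    intro q hp hq hh H1 H2
    cases q with
    | nil => simp at hh
    | cons x' tq =>
      obtain rfl : x = x' := by simpa using hh
      cases t with
      | nil => exact Or.inl (List.cons_prefix_cons.mpr ⟨rfl, List.nil_prefix⟩)
      | cons b t' =>
        cases tq with
        | nil => exact Or.inr (List.cons_prefix_cons.mpr ⟨rfl, List.nil_prefix⟩)
        | cons c tq' =>
          have hxb : (x, b) ∈ pathEdges (x :: b :: t') := by
            rw [pathEdges_cons_cons]; exact List.mem_cons_self
          have hxq : (x, b) ∈ pathEdges (x :: c :: tq') := by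
            apply H1 x b hxb (List.mem_cons_self)
            intro hlast
            rw [List.getLast?_cons_cons] at hlast
            exact (List.nodup_cons.mp hq).1 (List.mem_of_mem_getLast? (hlast ▸ rfl))
          have hbc : b = c := by
            have hxc : (x, c) ∈ pathEdges (x :: c :: tq') := by
              rw [pathEdges_cons_cons]; exact List.mem_cons_self
            exact pathEdges_out_unique _ hq hxq hxc
          subst hbc
          have hrec := ih (b :: tq') (List.nodup_cons.mp hp).2 (List.nodup_cons.mp hq).2 rfl
            (fun w c2 hw hwq hwl => by
              have h1 := H1 w c2 (mem_pathEdges_cons hw) (List.mem_cons_of_mem _ hwq)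
                (by rw [List.getLast?_cons_cons]; exact hwl)
              rw [pathEdges_cons_cons] at h1
              rcases List.mem_cons.mp h1 with g | g
              · exfalso; rw [Prod.mk.injEq] at g
                rw [g.1] at hwq
                exact (List.nodup_cons.mp hq).1 hwq
              · exact g)
            (fun w c2 hw hwq hwl => by
              have h1 := H2 w c2 (mem_pathEdges_cons hw) (List.mem_cons_of_mem _ hwq)
                (by rw [List.getLast?_cons_cons]; exact hwl)
              rw [pathEdges_cons_cons] at h1
              rcases List.mem_cons.mp h1 with g | g
              · exfalso; rw [Prod.mk.injEq] at g
                rw [g.1] at hwq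
                exact (List.nodup_cons.mp hp).1 hwq
              · exact g)
          rcases hrec with hrec | hrec
          · exact Or.inl (List.cons_prefix_cons.mpr ⟨rfl, hrec⟩)
          · exact Or.inr (List.cons_prefix_cons.mpr ⟨rfl, hrec⟩)

lemma eq_of_prefix_last {p q : List V} {y : V} (hpq : p <+: q) (hq : q.Nodup)
    (hp : p.getLast? = some y) (hql : q.getLast? = some y) : p = q := by
  obtain ⟨r, rfl⟩ := hpq
  cases r with
  | nil => rw [List.append_nil]
  | cons a r' =>
    exfalso
    rw [List.getLast?_append_of_ne_nil _ (List.cons_ne_nil a r')] at hql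
    have hyq : y ∈ a :: r' := List.mem_of_mem_getLast? (hql ▸ rfl)
    have hyp : y ∈ p := List.mem_of_mem_getLast? (hp ▸ rfl)
    exact (List.nodup_append'.mp hq).2.2 hyp hyq

lemma getLast_mem_pathEdges (p : List V) : ∀ {y : V} (a : V) (r : List V),
    p.getLast? = some y → (y, a) ∈ pathEdges (p ++ a :: r) := by
  induction p with
  | nil => intro y a r h; simp at h
  | cons x t ih =>
    intro y a r h
    cases t with
    | nil =>
      obtain rfl : x = y := by simpa using h
      rw [List.singleton_append, pathEdges_cons_cons]
      exact List.mem_cons_self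
    | cons b t' =>
      rw [List.getLast?_cons_cons] at h
      rw [List.cons_append]
      exact mem_pathEdges_cons (ih a r h)

lemma prefix_out {p q : List V} {y : V} (hpq : p <+: q) (hne : p ≠ q)
    (hp : p.getLast? = some y) : ∃ c, (y, c) ∈ pathEdges q := by
  obtain ⟨r, rfl⟩ := hpq
  cases r with
  | nil => exact absurd (List.append_nil p).symm hne
  | cons a r' => exact ⟨a, getLast_mem_pathEdges p a r' hp⟩


open MvPolynomial in
lemma prod_X_eq_monomial (F : Type*) [Field F] (l : List (V × V)) :
    (l.map fun e => (X e : MvPolynomial (V × V) F)).prod =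
      monomial (l.map fun e => Finsupp.single e 1).sum 1 := by
  induction l with
  | nil => simp
  | cons e t ih =>
    rw [List.map_cons, List.prod_cons, ih, List.map_cons, List.sum_cons]
    rw [show (X e : MvPolynomial (V × V) F) = monomial (Finsupp.single e 1) 1 from rfl]
    rw [monomial_mul, one_mul]

lemma sum_single_apply (l : List (V × V)) (a : V × V) :
    ((l.map fun e => Finsupp.single e (1 : ℕ)).sum) a = l.count a := by
  induction l with
  | nil => simp
  | cons e t ih =>
    rw [List.map_cons, List.sum_cons, Finsupp.add_apply, ih, List.count_cons]
    by_cases h : e = a <;> simp [h, Finsupp.single_apply, Nat.add_comm]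


set_option maxHeartbeats 1000000 in
lemma key (p1 p2 p1' p2' : List V) (x1 y1 x2 y2 : V)
    (hne : (x1, y1) ≠ (x2, y2))
    (n1 : p1.Nodup) (n2 : p2.Nodup) (n1' : p1'.Nodup) (n2' : p2'.Nodup)
    (h1h : p1.head? = some x1) (h1l : p1.getLast? = some y1)
    (h2h : p2.head? = some x2) (h2l : p2.getLast? = some y2)
    (h1h' : p1'.head? = some x1) (h1l' : p1'.getLast? = some y1)
    (h2h' : p2'.head? = some x2) (h2l' : p2'.getLast? = some y2)
    (mem12 : ∀ u, u ∈ p1 → u ∈ p2 → (u = x1 ∨ u = y1) ∧ (u = x2 ∨ u = y2))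
    (mem12' : ∀ u, u ∈ p1' → u ∈ p2' → (u = x1 ∨ u = y1) ∧ (u = x2 ∨ u = y2))
    (disj : ∀ e, e ∈ pathEdges p1 → e ∈ pathEdges p2 → False)
    (disj' : ∀ e, e ∈ pathEdges p1' → e ∈ pathEdges p2' → False)
    (hU : ∀ e, (e ∈ pathEdges p1 ∨ e ∈ pathEdges p2) ↔
      (e ∈ pathEdges p1' ∨ e ∈ pathEdges p2')) :
    p1 = p1' ∧ p2 = p2' := by
  have hp1 : p1 = p1' := by
    rcases eq_or_ne x1 x2 with hx | hx
    · -- x1 = x2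
      subst hx
      have hy : y1 ≠ y2 := fun h => hne (by rw [h])
      by_contra hne1
      obtain ⟨t1, rfl⟩ : ∃ t, p1 = x1 :: t := by
        cases p1 with
        | nil => simp at h1h
        | cons aa t =>
          obtain rfl : aa = x1 := by simpa using h1h
          exact ⟨t, rfl⟩
      obtain ⟨t1', rfl⟩ : ∃ t, p1' = x1 :: t := by
        cases p1' with
        | nil => simp at h1h'
        | cons aa t =>
          obtain rfl : aa = x1 := by simpa using h1h'
          exact ⟨t, rfl⟩
      cases t1 with
      | nil =>
        exact hne1 (eq_of_prefix_last ⟨t1', rfl⟩ n1' h1l h1l')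
      | cons a r1 =>
      cases t1' with
      | nil =>
        exact hne1 (eq_of_prefix_last ⟨a :: r1, rfl⟩ n1 h1l' h1l).symm
      | cons a' r1' =>
      have hx1a : (x1, a) ∈ pathEdges (x1 :: a :: r1) := by
        rw [pathEdges_cons_cons]; exact List.mem_cons_self
      have hx1a' : (x1, a') ∈ pathEdges (x1 :: a' :: r1') := by
        rw [pathEdges_cons_cons]; exact List.mem_cons_self
      have hx1y1 : x1 ≠ y1 := by
        intro h
        rw [List.getLast?_cons_cons] at h1l
        have hm : y1 ∈ a :: r1 := List.mem_of_mem_getLast? (h1l ▸ rfl)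
        rw [← h] at hm
        exact (List.nodup_cons.mp n1).1 hm
      rcases eq_or_ne a a' with haa | haa
      · -- same first edges: follow p1 p1'
        subst haa
        have H1 : ∀ w c, (w, c) ∈ pathEdges (x1 :: a :: r1) → w ∈ x1 :: a :: r1' →
            (x1 :: a :: r1').getLast? ≠ some w → (w, c) ∈ pathEdges (x1 :: a :: r1') := by
          intro w c hw hwq hwl
          rcases (hU (w, c)).mp (Or.inl hw) with g | g
          · exact g
          · have hm := mem12' w hwq (mem_left_of_pathEdges g)
            have hw1 : w ≠ y1 := fun h => by
              rw [h] at hw; exact pathEdges_last_not_source _ n1 h1l hw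
            have hw2 : w ≠ y2 := fun h => by
              rw [h] at g; exact pathEdges_last_not_source _ n2' h2l' g
            have hwx : w = x1 := hm.1.resolve_right hw1
            rw [hwx] at hw ⊢
            rw [pathEdges_out_unique _ n1 hw hx1a]
            exact hx1a'
        have H2 : ∀ w c, (w, c) ∈ pathEdges (x1 :: a :: r1') → w ∈ x1 :: a :: r1 →
            (x1 :: a :: r1).getLast? ≠ some w → (w, c) ∈ pathEdges (x1 :: a :: r1) := by
          intro w c hw hwq hwl
          rcases (hU (w, c)).mpr (Or.inl hw) with g | g
          · exact g
          · have hm := mem12 w hwq (mem_left_of_pathEdges g)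
            have hw1 : w ≠ y1 := fun h => by
              rw [h] at hw; exact pathEdges_last_not_source _ n1' h1l' hw
            have hw2 : w ≠ y2 := fun h => by
              rw [h] at g; exact pathEdges_last_not_source _ n2 h2l g
            have hwx : w = x1 := hm.1.resolve_right hw1
            rw [hwx] at hw ⊢
            rw [pathEdges_out_unique _ n1' hw hx1a']
            exact hx1a
        rcases follow _ _ n1 n1' (h1h.trans h1h'.symm) H1 H2 with pre | pre
        · exact hne1 (eq_of_prefix_last pre n1' h1l h1l')
        · exact hne1 (eq_of_prefix_last pre n1 h1l' h1l).symm
      · -- swapped first edges: follow p1 p2' and derive contradiction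
        have hsa : (x1, a) ∈ pathEdges p2' := by
          rcases (hU (x1, a)).mp (Or.inl hx1a) with g | g
          · exact absurd (pathEdges_out_unique _ n1' g hx1a') haa
          · exact g
        have hsa' : (x1, a') ∈ pathEdges p2 := by
          rcases (hU (x1, a')).mpr (Or.inl hx1a') with g | g
          · exact absurd (pathEdges_out_unique _ n1 g hx1a).symm haa
          · exact g
        obtain ⟨r2', rfl⟩ := pathEdges_head_eq n2' h2h' hsa
        obtain ⟨r2, rfl⟩ := pathEdges_head_eq n2 h2h hsa'
        have hx2a : (x1, a) ∈ pathEdges (x1 :: a :: r2') := by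
          rw [pathEdges_cons_cons]; exact List.mem_cons_self
        have hx2a' : (x1, a') ∈ pathEdges (x1 :: a' :: r2) := by
          rw [pathEdges_cons_cons]; exact List.mem_cons_self
        have hx1y2 : x1 ≠ y2 := by
          intro h
          rw [List.getLast?_cons_cons] at h2l'
          have hm : y2 ∈ a :: r2' := List.mem_of_mem_getLast? (h2l' ▸ rfl)
          rw [← h] at hm
          exact (List.nodup_cons.mp n2').1 hm
        have H1 : ∀ w c, (w, c) ∈ pathEdges (x1 :: a :: r1) → w ∈ x1 :: a :: r2' →
            (x1 :: a :: r2').getLast? ≠ some w → (w, c) ∈ pathEdges (x1 :: a :: r2') := by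
          intro w c hw hwq hwl
          rcases (hU (w, c)).mp (Or.inl hw) with g | g
          · exfalso
            have hm := mem12' w (mem_left_of_pathEdges g) hwq
            have hw1 : w ≠ y1 := fun h => by
              rw [h] at hw; exact pathEdges_last_not_source _ n1 h1l hw
            have hwx : w = x1 := hm.1.resolve_right hw1
            rw [hwx] at hw g
            exact haa ((pathEdges_out_unique _ n1 hw hx1a).symm.trans
              (pathEdges_out_unique _ n1' g hx1a'))
          · exact g
        have H2 : ∀ w c, (w, c) ∈ pathEdges (x1 :: a :: r2') → w ∈ x1 :: a :: r1 →
            (x1 :: a :: r1).getLast? ≠ some w → (w, c) ∈ pathEdges (x1 :: a :: r1) := by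
          intro w c hw hwq hwl
          rcases (hU (w, c)).mpr (Or.inr hw) with g | g
          · exact g
          · exfalso
            have hm := mem12 w hwq (mem_left_of_pathEdges g)
            have hw1 : w ≠ y1 := fun h => hwl (by rw [h]; exact h1l)
            have hwx : w = x1 := hm.1.resolve_right hw1
            rw [hwx] at hw g
            exact haa ((pathEdges_out_unique _ n2' hw hx2a).symm.trans
              (pathEdges_out_unique _ n2 g hx2a'))
        exfalso
        rcases follow _ _ n1 n2' (h1h.trans h2h'.symm) H1 H2 with pre | pre
        · have hne12 : (x1 :: a :: r1) ≠ (x1 :: a :: r2') := by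
            intro h
            rw [h] at h1l
            exact hy (Option.some.inj (h1l.symm.trans h2l'))
          obtain ⟨c, hc⟩ := prefix_out pre hne12 h1l
          rcases (hU (y1, c)).mpr (Or.inr hc) with g | g
          · exact pathEdges_last_not_source _ n1 h1l g
          · have hm := mem12 y1 (List.mem_of_mem_getLast? (h1l ▸ rfl))
              (mem_left_of_pathEdges g)
            rcases hm.2 with h | h
            · exact hx1y1 h.symm
            · exact hy h
        · have hne21 : (x1 :: a :: r2') ≠ (x1 :: a :: r1) := by
            intro h
            rw [h] at h2l'
            exact hy (Option.some.inj (h1l.symm.trans h2l'))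
          obtain ⟨c, hc⟩ := prefix_out pre hne21 h2l'
          rcases (hU (y2, c)).mp (Or.inl hc) with g | g
          · have hm := mem12' y2 (mem_left_of_pathEdges g)
              (List.mem_of_mem_getLast? (h2l' ▸ rfl))
            rcases hm.1 with h | h
            · exact hx1y2 h.symm
            · exact hy h.symm
          · exact pathEdges_last_not_source _ n2' h2l' g
    · -- x1 ≠ x2
      have H1 : ∀ w c, (w, c) ∈ pathEdges p1 → w ∈ p1' →
          p1'.getLast? ≠ some w → (w, c) ∈ pathEdges p1' := by
        intro w c hw hwq hwl
        rcases (hU (w, c)).mp (Or.inl hw) with g | g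
        · exact g
        · exfalso
          have hm := mem12' w hwq (mem_left_of_pathEdges g)
          have hw1 : w ≠ y1 := fun h => by
            rw [h] at hw; exact pathEdges_last_not_source _ n1 h1l hw
          have hw2 : w ≠ y2 := fun h => by
            rw [h] at g; exact pathEdges_last_not_source _ n2' h2l' g
          exact hx ((hm.1.resolve_right hw1).symm.trans (hm.2.resolve_right hw2))
      have H2 : ∀ w c, (w, c) ∈ pathEdges p1' → w ∈ p1 →
          p1.getLast? ≠ some w → (w, c) ∈ pathEdges p1 := by
        intro w c hw hwq hwl
        rcases (hU (w, c)).mpr (Or.inl hw) with g | g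
        · exact g
        · exfalso
          have hm := mem12 w hwq (mem_left_of_pathEdges g)
          have hw1 : w ≠ y1 := fun h => by
            rw [h] at hw; exact pathEdges_last_not_source _ n1' h1l' hw
          have hw2 : w ≠ y2 := fun h => by
            rw [h] at g; exact pathEdges_last_not_source _ n2 h2l g
          exact hx ((hm.1.resolve_right hw1).symm.trans (hm.2.resolve_right hw2))
      rcases follow _ _ n1 n1' (h1h.trans h1h'.symm) H1 H2 with pre | pre
      · exact eq_of_prefix_last pre n1' h1l h1l'
      · exact (eq_of_prefix_last pre n1 h1l' h1l).symm
  subst hp1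
  refine ⟨rfl, eq_of_pathEdges p2 p2' n2 n2' (h2h.trans h2h'.symm) ?_⟩
  intro e
  constructor
  · intro h
    rcases (hU e).mp (Or.inr h) with g | g
    · exact (disj e g h).elim
    · exact g
  · intro h
    rcases (hU e).mpr (Or.inr h) with g | g
    · exact (disj' e g h).elim
    · exact g


/-- For `(x1, y1) ≠ (x2, y2)`, the polynomial `F_disj` is
nonzero iff there is an internally vertex-disjoint pair of shortest paths;
in particular, distinct internally vertex-disjoint pairs contribute distinct
monomials `f(P1)f(P2)`. -/
theorem Fdisj_ne_zero_iff_exists_disjoint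
    (F : Type*) [Field F] [CharP F 2]
    (hG : NoNonposCycle E ℓ) (x1 y1 x2 y2 : V)
    (hne : (x1, y1) ≠ (x2, y2)) :
    (enumPoly2 F (disjPairs E ℓ x1 y1 x2 y2) ≠ 0 ↔
      (disjPairs E ℓ x1 y1 x2 y2).Nonempty) ∧
    Set.InjOn (fun q : List V × List V => pathMon F q.1 * pathMon F q.2)
      (disjPairs E ℓ x1 y1 x2 y2) := by
  classical
  have hinj : Set.InjOn (fun q : List V × List V => pathMon F q.1 * pathMon F q.2)
      (disjPairs E ℓ x1 y1 x2 y2) := by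
    rintro ⟨p1, p2⟩ hq ⟨p1', p2'⟩ hq' hmon
    obtain ⟨h1, h2, hd⟩ := hq
    obtain ⟨h1', h2', hd'⟩ := hq'
    have hmon' : pathMon F p1 * pathMon F p2 = pathMon F p1' * pathMon F p2' := hmon
    have n1 : p1.Nodup := h1.1.1.2.1
    have n2 : p2.Nodup := h2.1.1.2.1
    have n1' : p1'.Nodup := h1'.1.1.2.1
    have n2' : p2'.Nodup := h2'.1.1.2.1
    have h1hh : p1.head? = some x1 := h1.1.2.1
    have h1ll : p1.getLast? = some y1 := h1.1.2.2
    have h2hh : p2.head? = some x2 := h2.1.2.1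
    have h2ll : p2.getLast? = some y2 := h2.1.2.2
    have h1hh' : p1'.head? = some x1 := h1'.1.2.1
    have h1ll' : p1'.getLast? = some y1 := h1'.1.2.2
    have h2hh' : p2'.head? = some x2 := h2'.1.2.1
    have h2ll' : p2'.getLast? = some y2 := h2'.1.2.2
    have hdeg : (((pathEdges p1).map fun e => Finsupp.single e 1).sum
        + ((pathEdges p2).map fun e => Finsupp.single e 1).sum : (V × V) →₀ ℕ)
        = ((pathEdges p1').map fun e => Finsupp.single e 1).sum
        + ((pathEdges p2').map fun e => Finsupp.single e 1).sum := by
      have h := hmon'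
      simp only [pathMon, prod_X_eq_monomial, MvPolynomial.monomial_mul, one_mul] at h
      exact MvPolynomial.monomial_left_injective one_ne_zero h
    have hU : ∀ e, (e ∈ pathEdges p1 ∨ e ∈ pathEdges p2) ↔
        (e ∈ pathEdges p1' ∨ e ∈ pathEdges p2') := by
      intro e
      have happ := DFunLike.congr_fun hdeg e
      rw [Finsupp.add_apply, Finsupp.add_apply, sum_single_apply, sum_single_apply,
        sum_single_apply, sum_single_apply] at happ
      constructor
      · intro h
        by_contra hc
        push_neg at hc
        have c1 : (pathEdges p1').count e = 0 := List.count_eq_zero.mpr hc.1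
        have c2 : (pathEdges p2').count e = 0 := List.count_eq_zero.mpr hc.2
        rcases h with h | h
        · have hpos := List.count_pos_iff.mpr h; omega
        · have hpos := List.count_pos_iff.mpr h; omega
      · intro h
        by_contra hc
        push_neg at hc
        have c1 : (pathEdges p1).count e = 0 := List.count_eq_zero.mpr hc.1
        have c2 : (pathEdges p2).count e = 0 := List.count_eq_zero.mpr hc.2
        rcases h with h | h
        · have hpos := List.count_pos_iff.mpr h; omega
        · have hpos := List.count_pos_iff.mpr h; omega
    have edis : ∀ (a b : List V) (xa ya xb yb : V),
        a.Nodup → b.Nodup → a.head? = some xa → a.getLast? = some ya →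
        b.head? = some xb → b.getLast? = some yb →
        InternallyDisjoint a xa ya b xb yb → (xa, ya) ≠ (xb, yb) →
        ∀ e, e ∈ pathEdges a → e ∈ pathEdges b → False := by
      rintro a b xa ya xb yb na nb hah hal hbh hbl hdis hnee ⟨u, v⟩ hea heb
      have hu := hdis u (mem_left_of_pathEdges hea) (mem_left_of_pathEdges heb)
      have hv := hdis v (mem_right_of_pathEdges hea) (mem_right_of_pathEdges heb)
      simp only [Set.mem_inter_iff, Set.mem_insert_iff, Set.mem_singleton_iff] at hu hv
      have hua : u = xa := by
        rcases hu.1 with h | h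
        · exact h
        · rw [h] at hea; exact (pathEdges_last_not_source _ na hal hea).elim
      have hub : u = xb := by
        rcases hu.2 with h | h
        · exact h
        · rw [h] at heb; exact (pathEdges_last_not_source _ nb hbl heb).elim
      have hva : v = ya := by
        rcases hv.1 with h | h
        · rw [h] at hea; exact (pathEdges_head_not_target na hah hea).elim
        · exact h
      have hvb : v = yb := by
        rcases hv.2 with h | h
        · rw [h] at heb; exact (pathEdges_head_not_target nb hbh heb).elim
        · exact h
      exact hnee (by rw [← hua, ← hva, hub, hvb])
    have disj12 := edis p1 p2 x1 y1 x2 y2 n1 n2 h1hh h1ll h2hh h2ll hd hne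
    have disj12' := edis p1' p2' x1 y1 x2 y2 n1' n2' h1hh' h1ll' h2hh' h2ll' hd' hne
    have m12 : ∀ u, u ∈ p1 → u ∈ p2 → (u = x1 ∨ u = y1) ∧ (u = x2 ∨ u = y2) := by
      intro u ha hb
      have := hd u ha hb
      simpa [Set.mem_inter_iff] using this
    have m12' : ∀ u, u ∈ p1' → u ∈ p2' → (u = x1 ∨ u = y1) ∧ (u = x2 ∨ u = y2) := by
      intro u ha hb
      have := hd' u ha hb
      simpa [Set.mem_inter_iff] using this
    obtain ⟨e1, e2⟩ := key p1 p2 p1' p2' x1 y1 x2 y2 hne n1 n2 n1' n2'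
      h1hh h1ll h2hh h2ll h1hh' h1ll' h2hh' h2ll' m12 m12' disj12 disj12' hU
    rw [Prod.mk.injEq]
    exact ⟨e1, e2⟩
  have hfin : (disjPairs E ℓ x1 y1 x2 y2).Finite := by
    apply Set.Finite.subset (Set.Finite.prod (List.finite_length_le V (Fintype.card V))
      (List.finite_length_le V (Fintype.card V)))
    rintro ⟨p1, p2⟩ hq
    exact ⟨hq.1.1.1.2.1.length_le_card, hq.2.1.1.1.2.1.length_le_card⟩
  refine ⟨⟨?_, ?_⟩, hinj⟩
  · intro h0
    by_contra hemp
    rw [Set.not_nonempty_iff_eq_empty] at hemp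
    apply h0
    rw [enumPoly2, hemp]
    exact finsum_mem_empty
  · rintro ⟨q0, hq0⟩ h0
    have hmonq : ∀ q : List V × List V, pathMon F q.1 * pathMon F q.2
        = MvPolynomial.monomial (((pathEdges q.1).map fun e => Finsupp.single e 1).sum
          + ((pathEdges q.2).map fun e => Finsupp.single e 1).sum) (1 : F) := by
      intro q
      simp only [pathMon, prod_X_eq_monomial, MvPolynomial.monomial_mul, one_mul]
    have hsum : enumPoly2 F (disjPairs E ℓ x1 y1 x2 y2)
        = ∑ q ∈ hfin.toFinset, pathMon F q.1 * pathMon F q.2 := by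
      rw [enumPoly2, finsum_mem_eq_finite_toFinset_sum _ hfin]
    have hcoeff : MvPolynomial.coeff
        (((pathEdges q0.1).map fun e => Finsupp.single e 1).sum
          + ((pathEdges q0.2).map fun e => Finsupp.single e 1).sum)
        (enumPoly2 F (disjPairs E ℓ x1 y1 x2 y2)) = 1 := by
      rw [hsum, MvPolynomial.coeff_sum]
      have hterm : ∀ q ∈ hfin.toFinset, MvPolynomial.coeff
          (((pathEdges q0.1).map fun e => Finsupp.single e 1).sum
            + ((pathEdges q0.2).map fun e => Finsupp.single e 1).sum)
          (pathMon F q.1 * pathMon F q.2) = if q = q0 then 1 else 0 := by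
        intro q hq
        rw [hmonq q, MvPolynomial.coeff_monomial]
        by_cases h : q = q0
        · rw [if_pos h, if_pos (by rw [h])]
        · rw [if_neg h, if_neg ?_]
          intro hdq
          apply h
          apply hinj (hfin.mem_toFinset.mp hq) hq0
          show pathMon F q.1 * pathMon F q.2 = pathMon F q0.1 * pathMon F q0.2
          rw [hmonq q, hmonq q0, hdq]
      rw [Finset.sum_congr rfl hterm,
        Finset.sum_ite_eq' hfin.toFinset q0 (fun _ => (1 : F)),
        if_pos (hfin.mem_toFinset.mpr hq0)]
    rw [h0, MvPolynomial.coeff_zero] at hcoeff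
    exact one_ne_zero hcoeff.symm


end DSP
end

section
/- For any vertex v of G satisfying dist(x_i, y_i) = dist(x_i, v) + dist(v, y_i) for i = 1, 2, the following polynomial identity holds: H_v(x1, y1, x2, y2) = F(x2, v) · F_disj(x1, v, v, y2) · F(v, y1). -/
open scoped BigOperators

namespace DSP

variable {V : Type*} [Fintype V] [DecidableEq V]

variable (E : V → V → Prop) (ℓ : V → V → ℝ)

set_option linter.unusedSectionVars false

lemma pathEdges_cons (a : V) (l : List V) :
    pathEdges (a :: l) = (l.head?.map fun b => (a, b)).toList ++ pathEdges l := by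
  cases l with
  | nil => simp [pathEdges]
  | cons b t => simp [pathEdges]

lemma pathEdges_append {A D : List V} {v : V}
    (hA : A.getLast? = some v) (hD : D.head? = some v) :
    pathEdges (A ++ D.tail) = pathEdges A ++ pathEdges D := by
  induction A with
  | nil => simp at hA
  | cons a A ih =>
    cases A with
    | nil =>
      simp only [List.getLast?_singleton, Option.some.injEq] at hA
      subst hA
      cases D with
      | nil => simp at hD
      | cons d t =>
        simp only [List.head?_cons, Option.some.injEq] at hD
        subst hD
        simp [pathEdges]
    | cons b B =>
      rw [List.getLast?_cons_cons] at hA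
      have := ih hA
      have h2 : pathEdges (a :: (b :: B ++ D.tail)) = (a,b) :: pathEdges (b :: B ++ D.tail) := by
        simp [pathEdges]
      have h3 : pathEdges (a :: b :: B) = (a,b) :: pathEdges (b :: B) := by simp [pathEdges]
      rw [List.cons_append, h2, this, h3, List.cons_append]
lemma pathWeight_concat (ℓ : V → V → ℝ) {A D : List V} {v : V}
    (hA : A.getLast? = some v) (hD : D.head? = some v) :
    pathWeight ℓ (A ++ D.tail) = pathWeight ℓ A + pathWeight ℓ D := by
  unfold pathWeight
  rw [pathEdges_append hA hD, List.map_append, List.sum_append]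

lemma pathMon_concat (F : Type*) [Field F] [CharP F 2] {A D : List V} {v : V}
    (hA : A.getLast? = some v) (hD : D.head? = some v) :
    pathMon F (A ++ D.tail) = pathMon (V := V) F A * pathMon F D := by
  unfold pathMon
  rw [pathEdges_append hA hD, List.map_append, List.prod_append]

lemma chain'_concat {E : V → V → Prop} {A D : List V} {v : V}
    (hcA : A.Chain' E) (hcD : D.Chain' E)
    (hA : A.getLast? = some v) (hD : D.head? = some v) :
    (A ++ D.tail).Chain' E := by
  apply List.IsChain.append hcA (hcD.tail)
  intro x hx y hy
  rw [hA] at hx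
  cases hx
  cases D with
  | nil => simp at hD
  | cons d t =>
    simp only [List.head?_cons, Option.some.injEq] at hD
    subst hD
    cases t with
    | nil => simp at hy
    | cons e s =>
      simp only [List.tail_cons, List.head?_cons, Option.some.injEq] at hy
      cases hy
      exact hcD.rel_head

lemma getLast?_take_get {l : List V} {i : ℕ} (h : i < l.length) :
    (l.take (i+1)).getLast? = some (l.get ⟨i, h⟩) := by
  rw [List.getLast?_eq_getElem?, List.length_take, List.getElem?_take]
  have : min (i+1) l.length - 1 = i := by omega
  rw [this, if_pos (by omega)]
  simp [List.getElem?_eq_getElem h]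

lemma head?_drop_get {l : List V} {i : ℕ} (h : i < l.length) :
    (l.drop i).head? = some (l.get ⟨i, h⟩) := by
  rw [List.head?_drop]
  simp [List.getElem?_eq_getElem h]

lemma take_concat_drop (l : List V) (i : ℕ) :
    l.take (i+1) ++ (l.drop i).tail = l := by
  rw [List.tail_drop, List.take_append_drop]

lemma pathWeight_split (ℓ : V → V → ℝ) {l : List V} {i : ℕ} (h : i < l.length) :
    pathWeight ℓ l = pathWeight ℓ (l.take (i+1)) + pathWeight ℓ (l.drop i) := by
  conv_lhs => rw [← take_concat_drop l i]
  exact pathWeight_concat ℓ (getLast?_take_get h) (head?_drop_get h)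
lemma head?_take {l : List V} {k : ℕ} (hk : 1 ≤ k) : (l.take k).head? = l.head? := by
  cases l with
  | nil => simp
  | cons a t =>
    cases k with
    | zero => omega
    | succ m => simp

lemma getLast?_concat {A D : List V} {v : V}
    (hA : A.getLast? = some v) (hD : D.head? = some v) :
    (A ++ D.tail).getLast? = D.getLast? := by
  cases D with
  | nil => simp at hD
  | cons d t =>
    simp only [List.head?_cons, Option.some.injEq] at hD
    subst hD
    cases t with
    | nil => simpa using hA
    | cons e s =>
      rw [List.tail_cons, List.getLast?_append]
      cases hw : (e :: s).getLast? with
      | none => simp [List.getLast?_eq_none_iff] at hw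
      | some w => simp [hw]

lemma head?_concat {A : List V} (D : List V) (hA : A ≠ []) :
    (A ++ D).head? = A.head? := by
  cases A with
  | nil => simp at hA
  | cons a t => simp

lemma exists_dup {l : List V} (h : ¬ l.Nodup) :
    ∃ i j : Fin l.length, (i : ℕ) < j ∧ l.get i = l.get j := by
  rw [List.nodup_iff_injective_get] at h
  simp only [Function.Injective, not_forall] at h
  obtain ⟨a, b, hab, hne⟩ := h
  have hne' : (a : ℕ) ≠ (b : ℕ) := fun hc => hne (Fin.ext hc)
  rcases lt_or_gt_of_ne hne' with hl | hl
  · exact ⟨a, b, hl, hab⟩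
  · exact ⟨b, a, hl, hab.symm⟩

lemma reduce_walk {E : V → V → Prop} (ℓ : V → V → ℝ) {c : List V} {i j : ℕ}
    (hij : i < j) (hj : j < c.length) (hi : i < c.length)
    (hcij : c.get ⟨i, hi⟩ = c.get ⟨j, hj⟩) (hch : c.Chain' E) :
    ((c.drop i).take (j - i + 1)).length = j - i + 1 ∧
    ((c.drop i).take (j - i + 1)).Chain' E ∧
    ((c.drop i).take (j - i + 1)).head? = ((c.drop i).take (j - i + 1)).getLast? ∧
    (c.take (i+1) ++ (c.drop j).tail).Chain' E ∧
    (c.take (i+1) ++ (c.drop j).tail).head? = c.head? ∧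
    (c.take (i+1) ++ (c.drop j).tail).getLast? = c.getLast? ∧
    (c.take (i+1) ++ (c.drop j).tail).length = c.length - (j - i) ∧
    pathWeight ℓ c = pathWeight ℓ (c.take (i+1) ++ (c.drop j).tail)
      + pathWeight ℓ ((c.drop i).take (j - i + 1)) := by
  have hdlen : (c.drop i).length = c.length - i := List.length_drop
  have hji : j - i < (c.drop i).length := by omega
  have hgd : (c.drop i).get ⟨j - i, hji⟩ = c.get ⟨j, hj⟩ := by
    simp only [List.get_eq_getElem, List.getElem_drop]
    congr 1; omega
  have htake_last : (c.take (i+1)).getLast? = some (c.get ⟨i, hi⟩) := getLast?_take_get hi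
  have hdrop_head : (c.drop j).head? = some (c.get ⟨i, hi⟩) := by
    rw [head?_drop_get hj, hcij]
  refine ⟨?_, ?_, ?_, ?_, ?_, ?_, ?_, ?_⟩
  · rw [List.length_take]; omega
  · exact (hch.suffix (List.drop_suffix i c)).prefix (List.take_prefix _ _)
  · rw [head?_take (by omega), head?_drop_get hi, getLast?_take_get hji, hgd, hcij]
  · exact chain'_concat (hch.prefix (List.take_prefix _ _))
      (hch.suffix (List.drop_suffix j c)) htake_last hdrop_head
  · rw [head?_concat _ (by
      apply List.ne_nil_of_length_pos; rw [List.length_take]; omega)]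
    exact head?_take (by omega)
  · rw [getLast?_concat htake_last hdrop_head]
    rw [List.getLast?_eq_getElem?, List.getLast?_eq_getElem?, List.length_drop,
      List.getElem?_drop]
    congr 1; omega
  · rw [List.length_append, List.length_take, List.length_tail, List.length_drop]; omega
  · have h1 : pathWeight ℓ c = pathWeight ℓ (c.take (i+1)) + pathWeight ℓ (c.drop i) :=
      pathWeight_split ℓ hi
    have h2 : pathWeight ℓ (c.drop i) = pathWeight ℓ ((c.drop i).take ((j-i)+1))
        + pathWeight ℓ ((c.drop i).drop (j-i)) := pathWeight_split ℓ hji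
    have h3 : (c.drop i).drop (j-i) = c.drop j := by
      rw [List.drop_drop]; congr 1; omega
    have h4 : pathWeight ℓ (c.take (i+1) ++ (c.drop j).tail)
        = pathWeight ℓ (c.take (i+1)) + pathWeight ℓ (c.drop j) :=
      pathWeight_concat ℓ htake_last hdrop_head
    rw [h1, h2, h3, h4]; ring
lemma closedWalk_pos {E : V → V → Prop} {ℓ : V → V → ℝ} (hG : NoNonposCycle E ℓ) :
    ∀ n (c : List V), c.length ≤ n → 2 ≤ c.length → c.Chain' E →
      c.head? = c.getLast? → 0 < pathWeight ℓ c := by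
  intro n
  induction n with
  | zero => intro c h1 h2; omega
  | succ n ih =>
    intro c hlen h2 hch hcl
    by_cases hnd : c.tail.Nodup
    · exact hG c ⟨h2, hch, hcl, hnd⟩
    · obtain ⟨a, b, hab, hget⟩ := exists_dup hnd
      have hlt : c.tail.length = c.length - 1 := List.length_tail
      have hj1 : (b : ℕ) + 1 < c.length := by have := b.isLt; omega
      have hi1 : (a : ℕ) + 1 < c.length := by omega
      set i : ℕ := (a : ℕ) + 1 with hidef
      set j : ℕ := (b : ℕ) + 1 with hjdef
      have hij : i < j := by omega
      have hcij : c.get ⟨i, hi1⟩ = c.get ⟨j, hj1⟩ := by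
        have ha' := List.get_tail c (a : ℕ) a.isLt
        have hb' := List.get_tail c (b : ℕ) b.isLt
        rw [← ha', ← hb']
        simpa using hget
      obtain ⟨hL1, hC1ch, hC1cl, hC2ch, hC2h, hC2l, hL2, hw⟩ :=
        reduce_walk (E := E) ℓ hij hj1 hi1 hcij hch
      have p1 : 0 < pathWeight ℓ ((c.drop i).take (j - i + 1)) := by
        apply ih _ (by omega) (by omega) hC1ch hC1cl
      have p2 : 0 < pathWeight ℓ (c.take (i+1) ++ (c.drop j).tail) := by
        apply ih _ (by omega) (by omega) hC2ch
        rw [hC2h, hC2l]; exact hcl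
      rw [hw]; linarith
lemma dist_le_pathWeight {E : V → V → Prop} {ℓ : V → V → ℝ} {p : List V} {x y : V}
    (hp : IsPathFrom E p x y) : dist E ℓ x y ≤ (pathWeight ℓ p : EReal) :=
  sInf_le ⟨p, hp, rfl⟩

lemma walk_ge_dist {E : V → V → Prop} {ℓ : V → V → ℝ} (hG : NoNonposCycle E ℓ) :
    ∀ n (c : List V), c.length ≤ n → c ≠ [] → c.Chain' E → ∀ x y,
      c.head? = some x → c.getLast? = some y →
      dist E ℓ x y ≤ (pathWeight ℓ c : EReal) := by
  intro n
  induction n with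
  | zero =>
    intro c h1 h2
    exact absurd (List.length_pos_iff.mpr h2) (by omega)
  | succ n ih =>
    intro c hlen hne hch x y hhd hlast
    by_cases hnd : c.Nodup
    · exact dist_le_pathWeight ⟨⟨hne, hnd, hch⟩, hhd, hlast⟩
    · obtain ⟨a, b, hab, hget⟩ := exists_dup hnd
      obtain ⟨hL1, hC1ch, hC1cl, hC2ch, hC2h, hC2l, hL2, hw⟩ :=
        reduce_walk (E := E) ℓ hab b.isLt a.isLt hget hch
      have hblt := b.isLt
      have p1 : 0 < pathWeight ℓ ((c.drop (a : ℕ)).take ((b : ℕ) - (a : ℕ) + 1)) :=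
        closedWalk_pos hG _ _ le_rfl (by omega) hC1ch hC1cl
      have hC2ne : (c.take ((a : ℕ)+1) ++ (c.drop (b : ℕ)).tail) ≠ [] := by
        apply List.ne_nil_of_length_pos; omega
      have p2 : dist E ℓ x y ≤
          (pathWeight ℓ (c.take ((a : ℕ)+1) ++ (c.drop (b : ℕ)).tail) : EReal) := by
        apply ih _ (by omega) hC2ne hC2ch
        · rw [hC2h]; exact hhd
        · rw [hC2l]; exact hlast
      refine le_trans p2 ?_
      rw [EReal.coe_le_coe_iff, hw]
      linarith
lemma paths_finite (E : V → V → Prop) (x y : V) :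
    {p : List V | IsPathFrom E p x y}.Finite := by
  apply Set.Finite.subset (List.finite_length_le V (Fintype.card V))
  intro p hp
  exact hp.1.2.1.length_le_card

lemma sp_finite (E : V → V → Prop) (ℓ : V → V → ℝ) (x y : V) :
    {p : List V | IsShortestPath E ℓ p x y}.Finite :=
  (paths_finite E x y).subset fun p hp => hp.1

lemma exists_shortest {E : V → V → Prop} {ℓ : V → V → ℝ} {x y : V} {p0 : List V}
    (h : IsPathFrom E p0 x y) : ∃ p, IsShortestPath E ℓ p x y := by
  set S := {w : EReal | ∃ p : List V, IsPathFrom E p x y ∧ (pathWeight ℓ p : EReal) = w}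
  have hS : S = (fun p => (pathWeight ℓ p : EReal)) '' {p | IsPathFrom E p x y} := by
    ext w; simp [S, Set.mem_image, eq_comm]
  have hfin : S.Finite := by rw [hS]; exact (paths_finite E x y).image _
  have hne : S.Nonempty := ⟨_, p0, h, rfl⟩
  have := hne.csInf_mem hfin
  obtain ⟨p, hp, hw⟩ := this
  exact ⟨p, hp, hw⟩

lemma dist_eq_of_shortest {E : V → V → Prop} {ℓ : V → V → ℝ} {x y : V} {p : List V}
    (h : IsShortestPath E ℓ p x y) : dist E ℓ x y = (pathWeight ℓ p : EReal) := h.2.symm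

lemma indexOf_head {p : List V} {x : V} (hhd : p.head? = some x) : p.idxOf x = 0 := by
  cases p with
  | nil => simp at hhd
  | cons a t =>
    simp only [List.head?_cons, Option.some.injEq] at hhd
    subst hhd
    exact List.idxOf_cons_self

lemma subpath_from_head {p : List V} {x : V} (v : V) (hhd : p.head? = some x) :
    subpath p x v = p.take (p.idxOf v + 1) := by
  unfold subpath
  rw [indexOf_head hhd, List.drop_zero]

lemma indexOf_last {p : List V} {y : V} (hnd : p.Nodup) (hl : p.getLast? = some y) :
    p.idxOf y = p.length - 1 := by
  have hne : p ≠ [] := by rintro rfl; simp at hl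
  have hlen : 0 < p.length := List.length_pos_iff.mpr hne
  have h1 : p.length - 1 < p.length := by omega
  have hy : p.get ⟨p.length - 1, h1⟩ = y := by
    rw [List.getLast?_eq_getElem?] at hl
    simpa [List.getElem?_eq_getElem h1] using hl
  have hmem : y ∈ p := by rw [← hy]; exact List.get_mem _ _
  have h2 : p.idxOf y < p.length := List.idxOf_lt_length_iff.mpr hmem
  have := List.nodup_iff_injective_get.mp hnd
    (a₁ := ⟨p.idxOf y, h2⟩) (a₂ := ⟨p.length - 1, h1⟩)
    (by rw [hy]; exact List.idxOf_get h2)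
  exact congrArg Fin.val this

lemma subpath_to_last {p : List V} {y : V} (v : V) (hnd : p.Nodup)
    (hl : p.getLast? = some y) : subpath p v y = p.drop (p.idxOf v) := by
  unfold subpath
  have hne : p ≠ [] := by rintro rfl; simp at hl
  have hlen : 0 < p.length := List.length_pos_iff.mpr hne
  rw [indexOf_last hnd hl]
  have : p.length - 1 + 1 = p.length := by omega
  rw [this, List.take_length]
lemma getLast?_drop_eq {l : List V} {i : ℕ} (h : i < l.length) :
    (l.drop i).getLast? = l.getLast? := by
  rw [List.getLast?_eq_getElem?, List.getLast?_eq_getElem?, List.length_drop,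
    List.getElem?_drop]
  congr 1; omega

/-- The prefix and suffix of a shortest path at a vertex `v` with
`dist x y = dist x v + dist v y` are themselves shortest. -/
lemma shortest_split {E : V → V → Prop} {ℓ : V → V → ℝ} {x y v : V} {p : List V}
    (hp : IsShortestPath E ℓ p x y) (hv : v ∈ p)
    (hd : dist E ℓ x y = dist E ℓ x v + dist E ℓ v y) :
    IsShortestPath E ℓ (p.take (p.idxOf v + 1)) x v ∧
    IsShortestPath E ℓ (p.drop (p.idxOf v)) v y := by
  obtain ⟨⟨⟨hne, hnd, hch⟩, hhd, hlast⟩, hwd⟩ := hp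
  set i := p.idxOf v with hi0
  have hi : i < p.length := List.idxOf_lt_length_iff.mpr hv
  have hgv : p.get ⟨i, hi⟩ = v := List.idxOf_get hi
  have hpre : IsPathFrom E (p.take (i+1)) x v := by
    refine ⟨⟨?_, hnd.sublist (List.take_sublist _ _), hch.prefix (List.take_prefix _ _)⟩,
      ?_, ?_⟩
    · apply List.ne_nil_of_length_pos; rw [List.length_take]; omega
    · rw [head?_take (by omega)]; exact hhd
    · rw [getLast?_take_get hi, hgv]
  have hsuf : IsPathFrom E (p.drop i) v y := by
    refine ⟨⟨?_, hnd.sublist (List.drop_sublist _ _), hch.suffix (List.drop_suffix _ _)⟩,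
      ?_, ?_⟩
    · apply List.ne_nil_of_length_pos; rw [List.length_drop]; omega
    · rw [head?_drop_get hi, hgv]
    · rw [getLast?_drop_eq hi]; exact hlast
  obtain ⟨q1, hq1⟩ := exists_shortest (ℓ := ℓ) hpre
  obtain ⟨q2, hq2⟩ := exists_shortest (ℓ := ℓ) hsuf
  have h1 : dist E ℓ x v ≤ (pathWeight ℓ (p.take (i+1)) : EReal) := dist_le_pathWeight hpre
  have h2 : dist E ℓ v y ≤ (pathWeight ℓ (p.drop i) : EReal) := dist_le_pathWeight hsuf
  rw [dist_eq_of_shortest hq1] at h1 hd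
  rw [dist_eq_of_shortest hq2] at h2 hd
  rw [← hwd, pathWeight_split ℓ hi, ← EReal.coe_add] at hd
  rw [EReal.coe_le_coe_iff] at h1 h2
  rw [EReal.coe_eq_coe_iff] at hd
  have e1 : pathWeight ℓ (p.take (i+1)) = pathWeight ℓ q1 := by linarith
  have e2 : pathWeight ℓ (p.drop i) = pathWeight ℓ q2 := by linarith
  constructor
  · exact ⟨hpre, by rw [e1, ← dist_eq_of_shortest hq1]⟩
  · exact ⟨hsuf, by rw [e2, ← dist_eq_of_shortest hq2]⟩

/-- Concatenating shortest paths `x → v` and `v → y` gives a shortest path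
`x → y`, when `dist x y = dist x v + dist v y` and there are no nonpositive
cycles. -/
lemma shortest_concat {E : V → V → Prop} {ℓ : V → V → ℝ} (hG : NoNonposCycle E ℓ)
    {x y v : V} {A D : List V}
    (hA : IsShortestPath E ℓ A x v) (hD : IsShortestPath E ℓ D v y)
    (hd : dist E ℓ x y = dist E ℓ x v + dist E ℓ v y) :
    IsShortestPath E ℓ (A ++ D.tail) x y := by
  obtain ⟨⟨⟨hAne, hAnd, hAch⟩, hAhd, hAlast⟩, hAwd⟩ := hA
  obtain ⟨⟨⟨hDne, hDnd, hDch⟩, hDhd, hDlast⟩, hDwd⟩ := hD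
  have hch : (A ++ D.tail).Chain' E := chain'_concat hAch hDch hAlast hDhd
  have hhd : (A ++ D.tail).head? = some x := by rw [head?_concat _ hAne]; exact hAhd
  have hlast : (A ++ D.tail).getLast? = some y := by
    rw [getLast?_concat hAlast hDhd]; exact hDlast
  have hwW : pathWeight ℓ (A ++ D.tail) = pathWeight ℓ A + pathWeight ℓ D :=
    pathWeight_concat ℓ hAlast hDhd
  have hdW : dist E ℓ x y = ((pathWeight ℓ (A ++ D.tail) : ℝ) : EReal) := by
    rw [hd, ← hAwd, ← hDwd, hwW, EReal.coe_add]
  have hne : A ++ D.tail ≠ [] := by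
    intro h; exact hAne (List.append_eq_nil_iff.mp h).1
  have hnd : (A ++ D.tail).Nodup := by
    by_contra hnd
    obtain ⟨a, b, hab, hget⟩ := exists_dup hnd
    obtain ⟨hL1, hC1ch, hC1cl, hC2ch, hC2h, hC2l, hL2, hw⟩ :=
      reduce_walk (E := E) ℓ hab b.isLt a.isLt hget hch
    have hblt := b.isLt
    have p1 : 0 < pathWeight ℓ (((A ++ D.tail).drop (a : ℕ)).take ((b : ℕ) - (a : ℕ) + 1)) :=
      closedWalk_pos hG _ _ le_rfl (by omega) hC1ch hC1cl
    have hC2ne : ((A ++ D.tail).take ((a : ℕ)+1) ++ ((A ++ D.tail).drop (b : ℕ)).tail) ≠ [] := by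
      apply List.ne_nil_of_length_pos; omega
    have p2 : dist E ℓ x y ≤
        (pathWeight ℓ ((A ++ D.tail).take ((a : ℕ)+1) ++ ((A ++ D.tail).drop (b : ℕ)).tail) : EReal) :=
      walk_ge_dist hG _ _ le_rfl hC2ne hC2ch x y (by rw [hC2h]; exact hhd)
        (by rw [hC2l]; exact hlast)
    rw [hdW] at p2
    rw [EReal.coe_le_coe_iff] at p2
    rw [hw] at p2
    linarith
  exact ⟨⟨⟨hne, hnd, hch⟩, hhd, hlast⟩, hdW.symm⟩
lemma nodup_indexOf_get {l : List V} (hnd : l.Nodup) {k : ℕ} (hk : k < l.length) :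
    l.idxOf (l.get ⟨k, hk⟩) = k := by
  have hmem : l.get ⟨k, hk⟩ ∈ l := List.get_mem _ _
  have h2 : l.idxOf (l.get ⟨k, hk⟩) < l.length := List.idxOf_lt_length_iff.mpr hmem
  have := List.nodup_iff_injective_get.mp hnd
    (a₁ := ⟨l.idxOf (l.get ⟨k, hk⟩), h2⟩) (a₂ := ⟨k, hk⟩) (List.idxOf_get h2)
  exact congrArg Fin.val this

lemma drop_length_sub_one {A : List V} {v : V} (h : A.getLast? = some v) :
    A.drop (A.length - 1) = [v] := by
  have hne : A ≠ [] := by rintro rfl; simp at h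
  have hlen : 0 < A.length := List.length_pos_iff.mpr hne
  have h1 : A.length - 1 < A.length := by omega
  have hlen1 : (A.drop (A.length - 1)).length = 1 := by rw [List.length_drop]; omega
  obtain ⟨a, ha⟩ := List.length_eq_one_iff.mp hlen1
  have : (A.drop (A.length - 1)).head? = some v := by
    rw [head?_drop_get h1]
    rw [List.getLast?_eq_getElem?] at h
    simpa [List.getElem?_eq_getElem h1] using h
  rw [ha] at this ⊢
  simpa using this

lemma concat_indexOf {A D : List V} {v : V}
    (hW : (A ++ D.tail).Nodup) (hA : A.getLast? = some v) :
    (A ++ D.tail).idxOf v = A.length - 1 := by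
  have hne : A ≠ [] := by rintro rfl; simp at hA
  have hlen : 0 < A.length := List.length_pos_iff.mpr hne
  have h1 : A.length - 1 < A.length := by omega
  have h2 : A.length - 1 < (A ++ D.tail).length := by
    rw [List.length_append]; omega
  have hWv : (A ++ D.tail).get ⟨A.length - 1, h2⟩ = v := by
    simp only [List.get_eq_getElem]
    rw [List.getElem_append_left h1]
    rw [List.getLast?_eq_getElem?] at hA
    have := List.getElem?_eq_getElem h1
    rw [this] at hA
    exact (Option.some.injEq _ _).mp hA
  rw [← hWv]
  exact nodup_indexOf_get hW h2

lemma concat_subpath_left {A D : List V} {x v : V}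
    (hW : (A ++ D.tail).Nodup) (hx : A.head? = some x) (hA : A.getLast? = some v) :
    subpath (A ++ D.tail) x v = A := by
  have hne : A ≠ [] := by rintro rfl; simp at hA
  have hlen : 0 < A.length := List.length_pos_iff.mpr hne
  rw [subpath_from_head v (by rw [head?_concat _ hne]; exact hx)]
  rw [concat_indexOf hW hA]
  have : A.length - 1 + 1 = A.length := by omega
  rw [this, List.take_left]

lemma concat_subpath_right {A D : List V} {v y : V}
    (hW : (A ++ D.tail).Nodup) (hA : A.getLast? = some v) (hD : D.head? = some v)
    (hy : D.getLast? = some y) :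
    subpath (A ++ D.tail) v y = D := by
  have hne : A ≠ [] := by rintro rfl; simp at hA
  have hlen : 0 < A.length := List.length_pos_iff.mpr hne
  rw [subpath_to_last v hW (by rw [getLast?_concat hA hD]; exact hy)]
  rw [concat_indexOf hW hA]
  rw [List.drop_append_of_le_length (by omega)]
  rw [drop_length_sub_one hA]
  cases D with
  | nil => simp at hD
  | cons d t =>
    simp only [List.head?_cons, Option.some.injEq] at hD
    subst hD
    simp
lemma mem_of_getLast?' {l : List V} {v : V} (h : l.getLast? = some v) : v ∈ l := by
  rw [List.getLast?_eq_getElem?] at h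
  rw [List.getElem?_eq_some_iff] at h
  obtain ⟨hlt, he⟩ := h
  exact he ▸ List.getElem_mem hlt

lemma pathMon_split (F : Type*) [Field F] [CharP F 2] {l : List V} {i : ℕ}
    (h : i < l.length) :
    pathMon (V := V) F l = pathMon F (l.take (i+1)) * pathMon F (l.drop i) := by
  conv_lhs => rw [← take_concat_drop l i]
  exact pathMon_concat F (getLast?_take_get h) (head?_drop_get h)

/-- For any vertex `v` with
`dist(xᵢ, yᵢ) = dist(xᵢ, v) + dist(v, yᵢ)` (`i = 1, 2`),
`H_v(x1, y1, x2, y2) = F(x2, v) · F_disj(x1, v, v, y2) · F(v, y1)`. -/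
theorem Hv_eq_F_mul_Fdisj_mul_F
    (F : Type*) [Field F] [CharP F 2]
    (hG : NoNonposCycle E ℓ) (x1 y1 x2 y2 v : V)
    (hd1 : dist E ℓ x1 y1 = dist E ℓ x1 v + dist E ℓ v y1)
    (hd2 : dist E ℓ x2 y2 = dist E ℓ x2 v + dist E ℓ v y2) :
    enumPoly2 F (HvPairs E ℓ v x1 y1 x2 y2) =
      Fpoly F E ℓ x2 v * enumPoly2 F (disjPairs E ℓ x1 v v y2) *
        Fpoly F E ℓ v y1 := by
  classical
  have hHv : (HvPairs E ℓ v x1 y1 x2 y2).Finite := by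
    apply Set.Finite.subset ((sp_finite E ℓ x1 y1).prod (sp_finite E ℓ x2 y2))
    rintro ⟨p1, p2⟩ ⟨h1, h2, -⟩
    exact ⟨h1, h2⟩
  have hAB : (disjPairs E ℓ x1 v v y2).Finite := by
    apply Set.Finite.subset ((sp_finite E ℓ x1 v).prod (sp_finite E ℓ v y2))
    rintro ⟨p1, p2⟩ ⟨h1, h2, -⟩
    exact ⟨h1, h2⟩
  have hC := sp_finite E ℓ x2 v
  have hD := sp_finite E ℓ v y1
  rw [enumPoly2, enumPoly2, Fpoly, Fpoly, enumPoly, enumPoly,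
    finsum_mem_eq_finite_toFinset_sum _ hHv,
    finsum_mem_eq_finite_toFinset_sum _ hAB,
    finsum_mem_eq_finite_toFinset_sum _ hC,
    finsum_mem_eq_finite_toFinset_sum _ hD]
  set sHv := hHv.toFinset
  set sAB := hAB.toFinset
  set sC := hC.toFinset
  set sD := hD.toFinset
  have hRHS : (∑ p ∈ sC, pathMon F p) * (∑ q ∈ sAB, pathMon F q.1 * pathMon F q.2) *
      (∑ p ∈ sD, pathMon F p) =
      ∑ t ∈ sC ×ˢ (sAB ×ˢ sD),
        pathMon F t.1 * (pathMon F t.2.1.1 * pathMon F t.2.1.2) * pathMon F t.2.2 := by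
    rw [Finset.sum_product, Finset.sum_mul_sum, Finset.sum_mul]
    apply Finset.sum_congr rfl
    intro C _
    rw [Finset.sum_product, Finset.sum_mul]
    apply Finset.sum_congr rfl
    intro ab _
    rw [Finset.mul_sum]
  rw [hRHS]
  apply Finset.sum_nbij'
    (i := fun q => (subpath q.2 x2 v, ((subpath q.1 x1 v, subpath q.2 v y2), subpath q.1 v y1)))
    (j := fun t => (pathConcat t.2.1.1 t.2.2, pathConcat t.1 t.2.1.2))
  · -- maps into product
    rintro ⟨p1, p2⟩ hq
    rw [Set.Finite.mem_toFinset] at hq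
    obtain ⟨hp1, hp2, hv1, hv2, hdisj⟩ := hq
    obtain ⟨⟨⟨hne1, hnd1, hch1⟩, hhd1, hl1⟩, -⟩ := id hp1
    obtain ⟨⟨⟨hne2, hnd2, hch2⟩, hhd2, hl2⟩, -⟩ := id hp2
    obtain ⟨hpre1, hsuf1⟩ := shortest_split hp1 hv1 hd1
    obtain ⟨hpre2, hsuf2⟩ := shortest_split hp2 hv2 hd2
    rw [Finset.mem_product, Finset.mem_product]
    refine ⟨?_, ?_, ?_⟩
    · rw [Set.Finite.mem_toFinset]
      show IsShortestPath E ℓ (subpath p2 x2 v) x2 v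
      rw [subpath_from_head v hhd2]; exact hpre2
    · rw [Set.Finite.mem_toFinset]
      show (subpath p1 x1 v, subpath p2 v y2) ∈ disjPairs E ℓ x1 v v y2
      refine ⟨?_, ?_, ?_⟩
      · show IsShortestPath E ℓ (subpath p1 x1 v) x1 v
        rw [subpath_from_head v hhd1]; exact hpre1
      · show IsShortestPath E ℓ (subpath p2 v y2) v y2
        rw [subpath_to_last v hnd2 hl2]; exact hsuf2
      · exact hdisj
    · rw [Set.Finite.mem_toFinset]
      show IsShortestPath E ℓ (subpath p1 v y1) v y1
      rw [subpath_to_last v hnd1 hl1]; exact hsuf1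
  · -- maps back
    rintro ⟨C, ⟨A, B⟩, D⟩ ht
    rw [Finset.mem_product, Finset.mem_product] at ht
    obtain ⟨hCm, ⟨hABm, hDm⟩⟩ := ht
    rw [Set.Finite.mem_toFinset] at hCm hABm hDm
    obtain ⟨hA, hB, hABd⟩ := hABm
    have hW1 : IsShortestPath E ℓ (A ++ D.tail) x1 y1 := shortest_concat hG hA hDm hd1
    have hW2 : IsShortestPath E ℓ (C ++ B.tail) x2 y2 := shortest_concat hG hCm hB hd2
    rw [Set.Finite.mem_toFinset]
    show (pathConcat A D, pathConcat C B) ∈ HvPairs E ℓ v x1 y1 x2 y2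
    have hconc1 : pathConcat A D = A ++ D.tail := rfl
    have hconc2 : pathConcat C B = C ++ B.tail := rfl
    refine ⟨by rw [hconc1]; exact hW1, by rw [hconc2]; exact hW2, ?_, ?_, ?_⟩
    · rw [hconc1]
      exact List.mem_append_left _ (mem_of_getLast?' hA.1.2.2)
    · rw [hconc2]
      exact List.mem_append_left _ (mem_of_getLast?' hCm.1.2.2)
    · show InternallyDisjoint (subpath (pathConcat A D) x1 v) x1 v
        (subpath (pathConcat C B) v y2) v y2
      rw [hconc1, hconc2,
        concat_subpath_left hW1.1.1.2.1 hA.1.2.1 hA.1.2.2,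
        concat_subpath_right hW2.1.1.2.1 hCm.1.2.2 hB.1.2.1 hB.1.2.2]
      exact hABd
  · -- left inverse
    rintro ⟨p1, p2⟩ hq
    rw [Set.Finite.mem_toFinset] at hq
    obtain ⟨hp1, hp2, hv1, hv2, hdisj⟩ := hq
    obtain ⟨⟨⟨hne1, hnd1, hch1⟩, hhd1, hl1⟩, -⟩ := id hp1
    obtain ⟨⟨⟨hne2, hnd2, hch2⟩, hhd2, hl2⟩, -⟩ := id hp2
    have e1 : pathConcat (subpath p1 x1 v) (subpath p1 v y1) = p1 := by
      rw [subpath_from_head v hhd1, subpath_to_last v hnd1 hl1]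
      exact take_concat_drop p1 _
    have e2 : pathConcat (subpath p2 x2 v) (subpath p2 v y2) = p2 := by
      rw [subpath_from_head v hhd2, subpath_to_last v hnd2 hl2]
      exact take_concat_drop p2 _
    simp only [Prod.mk.injEq]
    exact ⟨e1, e2⟩
  · -- right inverse
    rintro ⟨C, ⟨A, B⟩, D⟩ ht
    rw [Finset.mem_product, Finset.mem_product] at ht
    obtain ⟨hCm, ⟨hABm, hDm⟩⟩ := ht
    rw [Set.Finite.mem_toFinset] at hCm hABm hDm
    obtain ⟨hA, hB, hABd⟩ := hABm
    have hW1 : IsShortestPath E ℓ (A ++ D.tail) x1 y1 := shortest_concat hG hA hDm hd1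
    have hW2 : IsShortestPath E ℓ (C ++ B.tail) x2 y2 := shortest_concat hG hCm hB hd2
    have hc1 : pathConcat A D = A ++ D.tail := rfl
    have hc2 : pathConcat C B = C ++ B.tail := rfl
    simp only [Prod.mk.injEq, hc1, hc2]
    refine ⟨?_, ⟨?_, ?_⟩, ?_⟩
    · exact concat_subpath_left hW2.1.1.2.1 hCm.1.2.1 hCm.1.2.2
    · exact concat_subpath_left hW1.1.1.2.1 hA.1.2.1 hA.1.2.2
    · exact concat_subpath_right hW2.1.1.2.1 hCm.1.2.2 hB.1.2.1 hB.1.2.2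
    · exact concat_subpath_right hW1.1.1.2.1 hA.1.2.2 hDm.1.2.1 hDm.1.2.2
  · -- values agree
    rintro ⟨p1, p2⟩ hq
    rw [Set.Finite.mem_toFinset] at hq
    obtain ⟨hp1, hp2, hv1, hv2, hdisj⟩ := hq
    obtain ⟨⟨⟨hne1, hnd1, hch1⟩, hhd1, hl1⟩, -⟩ := id hp1
    obtain ⟨⟨⟨hne2, hnd2, hch2⟩, hhd2, hl2⟩, -⟩ := id hp2
    have hi1 : p1.idxOf v < p1.length := List.idxOf_lt_length_iff.mpr hv1
    have hi2 : p2.idxOf v < p2.length := List.idxOf_lt_length_iff.mpr hv2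
    have m1 : pathMon (V := V) F p1 =
        pathMon F (subpath p1 x1 v) * pathMon F (subpath p1 v y1) := by
      rw [subpath_from_head v hhd1, subpath_to_last v hnd1 hl1]
      exact pathMon_split F hi1
    have m2 : pathMon (V := V) F p2 =
        pathMon F (subpath p2 x2 v) * pathMon F (subpath p2 v y2) := by
      rw [subpath_from_head v hhd2, subpath_to_last v hnd2 hl2]
      exact pathMon_split F hi2
    rw [m1, m2]
    ring

end DSP
end
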